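/- arXiv:1207.1930 — 3 statements merged into one kernel-verified Lean document; each statement's English description precedes it below -/
import Mathlib

section
/- Let A be a C*-algebra and let E be an A-A-equivalence bimodule which is isomorphic, as a right Hilbert A-module, to the standard module X_A (the module A with inner product ⟨a,b⟩_A = a*b). Then there exists an automorphism α of A such that E is isomorphic to E_α^A as an A-A-equivalence bimodule. -/
open scoped MultiplierAlgebra Kronecker
open Filter Topology
open scoped ENNReal NNReal

set_option linter.unusedSectionVars false
set_option synthInstance.maxHeartbeats 1000000
set_option maxHeartbeats 1000000

noncomputable section

universe u v w

namespace Paper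

section B1


variable (A : Type*) [NonUnitalCStarAlgebra A] [PartialOrder A] [StarOrderedRing A]

/-- A C*-algebra is simple if it is nonzero and has no nontrivial closed two-sided ideals. -/
def IsSimpleCStar : Prop :=
  (∃ a : A, a ≠ 0) ∧
    ∀ I : Submodule ℂ A, (∀ x ∈ I, ∀ a : A, a * x ∈ I ∧ x * a ∈ I) →
      IsClosed (I : Set A) → I = ⊥ ∨ I = ⊤

/-- σ-unital: existence of a strictly positive element, i.e. `h ≥ 0` with `hAh` dense. -/
def SigmaUnital : Prop :=
  ∃ h : A, 0 ≤ h ∧ Dense (Set.range fun a : A => h * a * h)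

/-- The hereditary C*-subalgebra `\overline{hAh}` generated by a positive element `h`. -/
def HereditarySub (h : A) : Set A := closure (Set.range fun a : A => h * a * h)

/-- A general hereditary C*-subalgebra. -/
structure IsHereditarySubalgebra (S : Set A) : Prop where
  isClosed : IsClosed S
  zero_mem : (0 : A) ∈ S
  add_mem : ∀ x ∈ S, ∀ y ∈ S, x + y ∈ S
  smul_mem : ∀ (c : ℂ), ∀ x ∈ S, c • x ∈ S
  mul_mem : ∀ x ∈ S, ∀ y ∈ S, x * y ∈ S
  star_mem : ∀ x ∈ S, star x ∈ S
  hereditary : ∀ a b : A, 0 ≤ a → a ≤ b → b ∈ S → a ∈ S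

/-- A densely defined lower semicontinuous trace on (a subalgebra `S` of) `A`;
the function is only meaningful on positive elements of `S`. -/
structure LscTraceOn (S : Set A) where
  toFun : A → ℝ≥0∞
  map_add : ∀ a ∈ S, ∀ b ∈ S, 0 ≤ a → 0 ≤ b → toFun (a + b) = toFun a + toFun b
  map_smul : ∀ (r : ℝ≥0), ∀ a ∈ S, 0 ≤ a → toFun (((r : ℝ) : ℂ) • a) = r * toFun a
  tracial : ∀ x : A, x ∈ S → toFun (star x * x) = toFun (x * star x)
  lsc : LowerSemicontinuousOn toFun {a | a ∈ S ∧ 0 ≤ a}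
  densely_defined : ∀ a ∈ S, 0 ≤ a → a ∈ closure {b | b ∈ S ∧ 0 ≤ b ∧ toFun b ≠ ∞}

/-- A densely defined lower semicontinuous trace on `A`. -/
abbrev LscTrace := LscTraceOn A Set.univ

/-- A trace is nontrivial (nonzero) if it does not vanish on all positive elements. -/
def LscTraceOn.Nontrivial {S : Set A} (T : LscTraceOn A S) : Prop :=
  ∃ c : A, 0 ≤ c ∧ T.toFun c ≠ 0

/-- A tracial state on `A`. -/
structure TracialState where
  toFun : A →L[ℂ] ℂ
  tracial : ∀ a b : A, toFun (a * b) = toFun (b * a)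
  pos : ∀ a : A, 0 ≤ a → 0 ≤ (toFun a).re ∧ (toFun a).im = 0
  norm_one : ‖toFun‖ = 1

/-- Every densely defined lower semicontinuous trace on `A` is bounded. -/
def NoUnboundedTrace : Prop :=
  ∀ T : LscTrace A, ∃ C : ℝ≥0, ∀ a : A, 0 ≤ a → ‖a‖ ≤ 1 → T.toFun a ≤ C

variable (AK : Type*) [NonUnitalCStarAlgebra AK] [PartialOrder AK] [StarOrderedRing AK]

/-- A model for the stabilization `A ⊗ K`: the algebra `AK` is generated by a system of
"matrix corners" `ι a i j` (corresponding to `a ⊗ e_{ij}`). -/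
structure Stabilization where
  ι : A → ℕ → ℕ → AK
  ι_add : ∀ a b i j, ι (a + b) i j = ι a i j + ι b i j
  ι_smul : ∀ (c : ℂ) a i j, ι (c • a) i j = c • ι a i j
  ι_mul : ∀ (a b : A) (i j k l : ℕ), ι a i j * ι b k l = if j = k then ι (a * b) i l else 0
  ι_star : ∀ a i j, star (ι a i j) = ι (star a) j i
  ι_norm : ∀ a i j, ‖ι a i j‖ = ‖a‖
  dense_span : Dense (Submodule.span ℂ {x : AK | ∃ a i j, x = ι a i j} : Set AK)

variable {A AK}

/-- Cuntz subequivalence of positive elements. -/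
def CuntzLE (a b : AK) : Prop :=
  ∃ x : ℕ → AK, Tendsto (fun n => ‖star (x n) * b * x n - a‖) atTop (𝓝 0)

/-- Cuntz equivalence of positive elements. -/
def CuntzEquiv (a b : AK) : Prop := CuntzLE a b ∧ CuntzLE b a

variable (AK)

/-- The Cuntz semigroup is almost unperforated: `(k+1)[a] ≤ k[b]` implies `[a] ≤ [b]`.
Sums of copies of a class are realized by sums of pairwise orthogonal Cuntz-equivalent
elemets of the stable algebra. -/
def CuAlmostUnperforated : Prop :=
  ∀ (k : ℕ), 0 < k → ∀ (a b : AK), 0 ≤ a → 0 ≤ b →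
    ∀ (u : Fin (k + 1) → AK) (v : Fin k → AK),
      (∀ i, 0 ≤ u i ∧ CuntzEquiv (u i) a) → (∀ i j, i ≠ j → u i * u j = 0) →
      (∀ i, 0 ≤ v i ∧ CuntzEquiv (v i) b) → (∀ i j, i ≠ j → v i * v j = 0) →
      CuntzLE (∑ i, u i) (∑ i, v i) → CuntzLE a b

/-- `A ⊗ K` contains no nonzero projections. -/
def StablyProjectionless : Prop :=
  ∀ p : AK, star p = p → p * p = p → p = 0

variable {AK}

/-- The dimension function `d_τ(a) = lim_n τ(a^{1/n})` associated to a densely defined lower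
semicontinuous trace (on the stabilization). -/
def dimTrace (T : LscTrace AK) (a : AK) : ℝ≥0∞ :=
  ⨆ n : ℕ, T.toFun (cfcₙ (fun t : ℝ => t ^ ((n : ℝ) + 1)⁻¹) a)

variable (AK)

/-- Strict comparison of positive elements by (nonzero) traces. -/
def StrictComparison : Prop :=
  ∀ a b : AK, 0 ≤ a → 0 ≤ b →
    (∀ T : LscTrace AK, T.Nontrivial →
      dimTrace T a < dimTrace T b ∧ dimTrace T b ≠ ∞) →
    CuntzLE a b

/-- Almost stable rank one: every σ-unital hereditary subalgebra `B` of `A ⊗ K` satisfies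
`B ⊆ closure (GL(B^~))`. -/
def AlmostStableRankOne : Prop :=
  ∀ h : AK, 0 ≤ h → ∀ b ∈ HereditarySub AK h, ∀ ε : ℝ, 0 < ε →
    ∃ z w : Unitization ℂ AK, z.snd ∈ HereditarySub AK h ∧ w.snd ∈ HereditarySub AK h ∧
      z * w = 1 ∧ w * z = 1 ∧ ‖z - (b : Unitization ℂ AK)‖ < ε

variable {AK}

variable (A) in
/-- The hereditary subalgebra generated by `h` is isomorphic to `A`. -/
def HerIso (h : AK) : Prop :=
  ∃ f : A →⋆ₙₐ[ℂ] AK, Isometry f ∧ Set.range f = HereditarySub AK h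

variable (A) in
/-- The fundamental group (as a subset of `(0,∞]`):
`{ d_τ(h) : h positive in A ⊗ K, \overline{h(A⊗K)h} ≅ A }`. -/
def FundSet (τK : LscTrace AK) : Set ℝ≥0∞ :=
  {r | ∃ h : AK, 0 ≤ h ∧ HerIso A h ∧ r = dimTrace τK h}


end B1

section B2


variable (A : Type*) [NonUnitalCStarAlgebra A] [PartialOrder A] [StarOrderedRing A]

/-- Every element of a C*-algebra is a ℂ-linear combination of products. -/
lemma span_products_eq_top :
    Submodule.span ℂ {x : A | ∃ y z : A, x = y * z} = ⊤ := by
  rw [Submodule.eq_top_iff']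
  have key : ∀ s : A, IsSelfAdjoint s →
      s ∈ Submodule.span ℂ {x : A | ∃ y z : A, x = y * z} := by
    intro s hs
    have h1 : s⁺ ∈ {x : A | ∃ y z : A, x = y * z} :=
      ⟨CFC.sqrt s⁺, CFC.sqrt s⁺, (CFC.sqrt_mul_sqrt_self _ (CFC.posPart_nonneg s)).symm⟩
    have h2 : s⁻ ∈ {x : A | ∃ y z : A, x = y * z} :=
      ⟨CFC.sqrt s⁻, CFC.sqrt s⁻, (CFC.sqrt_mul_sqrt_self _ (CFC.negPart_nonneg s)).symm⟩
    have := CFC.posPart_sub_negPart s hs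
    rw [← this]
    exact sub_mem (Submodule.subset_span h1) (Submodule.subset_span h2)
  intro a
  have hre : IsSelfAdjoint ((2⁻¹ : ℂ) • (a + star a)) := by
    rw [IsSelfAdjoint, star_smul, star_add, star_star]
    congr 1
    · simp
    · exact add_comm _ _
  have him : IsSelfAdjoint ((-(Complex.I) * 2⁻¹) • (a - star a)) := by
    rw [IsSelfAdjoint, star_smul, star_sub, star_star]
    rw [show star (-(Complex.I) * 2⁻¹) = Complex.I * 2⁻¹ by simp]
    rw [show (star a - a) = -(a - star a) by abel]
    rw [smul_neg, ← neg_smul, neg_mul_eq_neg_mul]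
  have key2 : a = (2⁻¹ : ℂ) • (a + star a) +
      Complex.I • ((-(Complex.I) * 2⁻¹) • (a - star a)) := by
    rw [smul_smul]
    rw [show Complex.I * (-(Complex.I) * 2⁻¹) = (2⁻¹ : ℂ) by
      rw [← mul_assoc, mul_neg, Complex.I_mul_I]; ring]
    rw [smul_add, smul_sub]
    rw [show ((2⁻¹ : ℂ) • a + (2⁻¹ : ℂ) • star a + ((2⁻¹ : ℂ) • a - (2⁻¹ : ℂ) • star a))
        = (2⁻¹ : ℂ) • a + (2⁻¹ : ℂ) • a by abel]
    rw [← add_smul]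
    norm_num
  rw [key2]
  exact add_mem (key _ hre) (Submodule.smul_mem _ _ (key _ him))

variable (E F E₁ E₂ E₃ : Type*)
  [NormedAddCommGroup E] [NormedSpace ℂ E] [CompleteSpace E]
  [NormedAddCommGroup F] [NormedSpace ℂ F] [CompleteSpace F]
  [NormedAddCommGroup E₁] [NormedSpace ℂ E₁] [CompleteSpace E₁]
  [NormedAddCommGroup E₂] [NormedSpace ℂ E₂] [CompleteSpace E₂]
  [NormedAddCommGroup E₃] [NormedSpace ℂ E₃] [CompleteSpace E₃]

/-- A (complete) right Hilbert `A`-module structure on `E`. -/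
structure RightHilbertModule where
  smulR : E → A → E
  inner : E → E → A
  add_smulR : ∀ x y a, smulR (x + y) a = smulR x a + smulR y a
  smulR_add : ∀ x a b, smulR x (a + b) = smulR x a + smulR x b
  smulR_mul : ∀ x a b, smulR (smulR x a) b = smulR x (a * b)
  smulC_smulR : ∀ (c : ℂ) x a, smulR (c • x) a = c • smulR x a
  smulR_smulC : ∀ (c : ℂ) x a, smulR x (c • a) = c • smulR x a
  inner_add_right : ∀ x y z, inner x (y + z) = inner x y + inner x z
  inner_smulC_right : ∀ (c : ℂ) x y, inner x (c • y) = c • inner x y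
  inner_smulR_right : ∀ x y a, inner x (smulR y a) = inner x y * a
  inner_conj : ∀ x y, star (inner x y) = inner y x
  inner_nonneg : ∀ x, 0 ≤ inner x x
  norm_inner : ∀ x, ‖x‖ ^ 2 = ‖inner x x‖

variable {A E F E₁ E₂ E₃}

/-- A countable basis (frame) of a right Hilbert module. -/
def RightHilbertModule.IsBasis (M : RightHilbertModule A E) (ξ : ℕ → E) : Prop :=
  ∀ η : E, Tendsto (fun N => ∑ i ∈ Finset.range N, M.smulR (ξ i) (M.inner (ξ i) η))
    atTop (𝓝 η)

/-- A right Hilbert module is countably generated. -/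
def RightHilbertModule.CountablyGenerated (M : RightHilbertModule A E) : Prop :=
  ∃ g : ℕ → E,
    Dense (Submodule.span ℂ ({x | ∃ n a, x = M.smulR (g n) a} ∪ Set.range g) : Set E)

/-- Isomorphism of right Hilbert modules. -/
def RightModuleIso (M : RightHilbertModule A E) (N : RightHilbertModule A F) : Prop :=
  ∃ Φ : E ≃ₗ[ℂ] F, (∀ x a, Φ (M.smulR x a) = N.smulR (Φ x) a) ∧
    ∀ x y, N.inner (Φ x) (Φ y) = M.inner x y

variable (A E)

/-- An `A`–`A`-equivalence bimodule (imprimitivity bimodule). -/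
structure EquivalenceBimodule extends RightHilbertModule A E where
  smulL : A → E → E
  smulL_add : ∀ a x y, smulL a (x + y) = smulL a x + smulL a y
  add_smulL : ∀ a b x, smulL (a + b) x = smulL a x + smulL b x
  smulL_mul : ∀ a b x, smulL (a * b) x = smulL a (smulL b x)
  smulC_smulL : ∀ (c : ℂ) a x, smulL (c • a) x = c • smulL a x
  smulL_smulR : ∀ a x b, smulL a (smulR x b) = smulR (smulL a x) b
  innerL : E → E → A
  innerL_add_left : ∀ x y z, innerL (x + y) z = innerL x z + innerL y z
  innerL_smulL_left : ∀ a x y, innerL (smulL a x) y = a * innerL x y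
  innerL_smulC_left : ∀ (c : ℂ) x y, innerL (c • x) y = c • innerL x y
  innerL_conj : ∀ x y, star (innerL x y) = innerL y x
  innerL_nonneg : ∀ x, 0 ≤ innerL x x
  compat : ∀ x y z, smulL (innerL x y) z = smulR x (inner y z)
  fullR : Dense (Submodule.span ℂ {a : A | ∃ x y, a = inner x y} : Set A)
  fullL : Dense (Submodule.span ℂ {a : A | ∃ x y, a = innerL x y} : Set A)

variable {A E}

/-- Isomorphism of equivalence bimodules. -/
def BimoduleIso (M : EquivalenceBimodule A E) (N : EquivalenceBimodule A F) : Prop :=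
  ∃ Φ : E ≃ₗ[ℂ] F, (∀ x a, Φ (M.smulR x a) = N.smulR (Φ x) a) ∧
    (∀ a x, Φ (M.smulL a x) = N.smulL a (Φ x)) ∧
    (∀ x y, N.inner (Φ x) (Φ y) = M.inner x y) ∧
    (∀ x y, N.innerL (Φ x) (Φ y) = M.innerL x y)

variable (A)

lemma dense_of_span_products {s : Set A} (hsub : {x : A | ∃ y z : A, x = y * z} ⊆ s) :
    Dense (Submodule.span ℂ s : Set A) := by
  have : Submodule.span ℂ s = ⊤ :=
    eq_top_iff.mpr (by rw [← span_products_eq_top A]; exact Submodule.span_mono hsub)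
  rw [this]
  simp [Submodule.top_coe, dense_univ]

/-- The standard right Hilbert module `X_A = A` with `⟨a,b⟩ = a* b`. -/
def standardRightModule : RightHilbertModule A A where
  smulR x a := x * a
  inner x y := star x * y
  add_smulR x y a := by rw [add_mul]
  smulR_add x a b := by rw [mul_add]
  smulR_mul x a b := by rw [mul_assoc]
  smulC_smulR c x a := by rw [smul_mul_assoc]
  smulR_smulC c x a := by rw [mul_smul_comm]
  inner_add_right x y z := by rw [mul_add]
  inner_smulC_right c x y := by rw [mul_smul_comm]
  inner_smulR_right x y a := by rw [mul_assoc]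
  inner_conj x y := by rw [star_mul, star_star]
  inner_nonneg x := star_mul_self_nonneg x
  norm_inner x := by rw [CStarRing.norm_star_mul_self, sq]

/-- The bimodule `E_α^A`: the space `A` with right action and right inner product twisted
by the automorphism `α`. -/
def Ealpha (α : A ≃⋆ₐ[ℂ] A) : EquivalenceBimodule A A where
  smulR x a := x * α a
  inner x y := α.symm (star x * y)
  add_smulR x y a := by rw [add_mul]
  smulR_add x a b := by rw [map_add, mul_add]
  smulR_mul x a b := by rw [map_mul, mul_assoc]
  smulC_smulR c x a := by rw [smul_mul_assoc]
  smulR_smulC c x a := by rw [map_smul, mul_smul_comm]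
  inner_add_right x y z := by rw [mul_add, map_add]
  inner_smulC_right c x y := by rw [mul_smul_comm, map_smul]
  inner_smulR_right x y a := by
    rw [← mul_assoc, map_mul, StarAlgEquiv.symm_apply_apply]
  inner_conj x y := by rw [← map_star, star_mul, star_star]
  inner_nonneg x := by
    have h : star x * x = α (star (α.symm x) * α.symm x) := by
      rw [map_mul, map_star, StarAlgEquiv.apply_symm_apply]
    rw [h, StarAlgEquiv.symm_apply_apply]
    exact star_mul_self_nonneg _
  norm_inner x := by
    rw [NonUnitalStarAlgHom.norm_map α.symm α.symm.injective,
      CStarRing.norm_star_mul_self, sq]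
  smulL a x := a * x
  smulL_add a x y := mul_add a x y
  add_smulL a b x := add_mul a b x
  smulL_mul a b x := mul_assoc a b x
  smulC_smulL c a x := smul_mul_assoc c a x
  smulL_smulR a x b := by rw [mul_assoc]
  innerL x y := x * star y
  innerL_add_left x y z := add_mul x y _
  innerL_smulL_left a x y := mul_assoc a x _
  innerL_smulC_left c x y := smul_mul_assoc c x _
  innerL_conj x y := by rw [star_mul, star_star]
  innerL_nonneg x := mul_star_self_nonneg x
  compat x y z := by
    rw [mul_assoc, StarAlgEquiv.apply_symm_apply]
  fullR := by
    apply dense_of_span_products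
    rintro w ⟨u, v, rfl⟩
    refine ⟨star (α u), α v, ?_⟩
    rw [star_star, ← map_mul, StarAlgEquiv.symm_apply_apply]
  fullL := by
    apply dense_of_span_products
    rintro w ⟨u, v, rfl⟩
    exact ⟨u, star v, by rw [star_star]⟩

variable {A}

/-- The value `\hat{T}_τ([X]) = Σ_i τ(⟨ξ_i, ξ_i⟩)` of a countable basis of a right Hilbert
module; for equivalence bimodules this computes the map `T` on the Picard group. -/
def bimValue (τ : TracialState A) (M : RightHilbertModule A E) (ξ : ℕ → E) : ℝ≥0∞ :=
  ∑' i, ENNReal.ofReal ((τ.toFun (M.inner (ξ i) (ξ i))).re)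

/-- `M₃` is the interior (relative) tensor product `M₁ ⊗_A M₂` of equivalence bimodules. -/
def IsRelTensor (M₁ : EquivalenceBimodule A E₁) (M₂ : EquivalenceBimodule A E₂)
    (M₃ : EquivalenceBimodule A E₃) : Prop :=
  ∃ β : E₁ → E₂ → E₃,
    (∀ x x' y, β (x + x') y = β x y + β x' y) ∧
    (∀ x y y', β x (y + y') = β x y + β x y') ∧
    (∀ (c : ℂ) x y, β (c • x) y = c • β x y) ∧
    (∀ x a y, β (M₁.smulR x a) y = β x (M₂.smulL a y)) ∧
    (∀ a x y, β (M₁.smulL a x) y = M₃.smulL a (β x y)) ∧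
    (∀ x y a, β x (M₂.smulR y a) = M₃.smulR (β x y) a) ∧
    (∀ x x' y y', M₃.inner (β x y) (β x' y') =
      M₂.inner y (M₂.smulL (M₁.inner x x') y')) ∧
    (∀ x x' y y', M₃.innerL (β x y) (β x' y') =
      M₁.innerL (M₁.smulR x (M₂.innerL y y')) x') ∧
    Dense (Submodule.span ℂ {z : E₃ | ∃ x y, z = β x y} : Set E₃)


end B2

/-- **Proposition 2.1.**  If an `A`–`A`-equivalence bimodule `E` is isomorphic, as a right
Hilbert `A`-module, to the standard module `X_A`, then `E ≅ E_α^A` for some automorphism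
`α` of `A`. -/
theorem equivBimodule_of_rightModuleIso_standard
    {A : Type u} [NonUnitalCStarAlgebra A] [PartialOrder A] [StarOrderedRing A]
    {E : Type v} [NormedAddCommGroup E] [NormedSpace ℂ E] [CompleteSpace E]
    (M : EquivalenceBimodule A E)
    (h : RightModuleIso M.toRightHilbertModule (standardRightModule A)) :
    ∃ α : A ≃⋆ₐ[ℂ] A, BimoduleIso M (Ealpha A α) := by
  classical
  obtain ⟨Φ, hR0, hI0⟩ := h
  have hR : ∀ (x : E) (a : A), Φ (M.smulR x a) = Φ x * a := hR0
  have hI : ∀ x y : E, star (Φ x) * Φ y = M.inner x y := hI0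
  have hdense : Dense ((Submodule.span ℂ {a : A | ∃ x y, a = M.innerL x y} : Submodule ℂ A)
      : Set A) := M.fullL
  set P : A → A → Prop := fun s c => ∀ z : E, Φ (M.smulL s z) = c * Φ z with hPdef
  have smulL_zero : ∀ z : E, M.smulL 0 z = 0 := by
    intro z
    have h0 := M.add_smulL 0 0 z
    rw [add_zero] at h0
    exact add_eq_left.mp h0.symm
  have uniqc : ∀ c c' : A, (∀ b : A, c * b = c' * b) → c = c' := by
    intro c c' hcc
    have hd : (c - c') * star (c - c') = 0 := by
      rw [sub_mul, hcc (star (c - c')), sub_self]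
    have hn : ‖c - c'‖ * ‖c - c'‖ = 0 := by
      rw [← CStarRing.norm_self_mul_star, hd, norm_zero]
    have : ‖c - c'‖ = 0 := by nlinarith [norm_nonneg (c - c')]
    exact sub_eq_zero.mp (norm_eq_zero.mp this)
  have uniqcP : ∀ s c c', P s c → P s c' → c = c' := by
    intro s c c' h1 h2
    refine uniqc c c' fun b => ?_
    have hb := (h1 (Φ.symm b)).symm.trans (h2 (Φ.symm b))
    rwa [Φ.apply_symm_apply] at hb
  have uniqsP : ∀ s s' c, P s c → P s' c → s = s' := by
    intro s s' c h1 h2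
    have hz : ∀ z : E, M.smulL s z = M.smulL s' z := fun z =>
      Φ.injective ((h1 z).trans (h2 z).symm)
    have hgen : ∀ b ∈ (Submodule.span ℂ {a : A | ∃ x y, a = M.innerL x y} : Submodule ℂ A),
        s * b = s' * b := by
      intro b hb
      induction hb using Submodule.span_induction with
      | mem b hb =>
        obtain ⟨x, y, rfl⟩ := hb
        rw [← M.innerL_smulL_left, hz, M.innerL_smulL_left]
      | zero => simp
      | add x y hx hy ihx ihy => rw [mul_add, mul_add, ihx, ihy]
      | smul r x hx ihx => rw [mul_smul_comm, mul_smul_comm, ihx]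
    refine uniqc s s' fun b => ?_
    have hclosed : IsClosed {b : A | s * b = s' * b} :=
      isClosed_eq (continuous_mul_left s) (continuous_mul_left s')
    have hsub : closure ((Submodule.span ℂ {a : A | ∃ x y, a = M.innerL x y} :
        Submodule ℂ A) : Set A) ⊆ {b : A | s * b = s' * b} :=
      hclosed.closure_subset_iff.mpr hgen
    rw [hdense.closure_eq] at hsub
    exact hsub (Set.mem_univ b)
  have hgenP : ∀ x y : E, P (M.innerL x y) (Φ x * star (Φ y)) := by
    intro x y z
    rw [M.compat, hR, ← hI, ← mul_assoc]
  have hP0 : P 0 0 := fun z => by rw [smulL_zero z, map_zero, zero_mul]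
  have hPadd : ∀ s c t d, P s c → P t d → P (s + t) (c + d) := by
    intro s c t d h1 h2 z
    rw [M.add_smulL, map_add, h1 z, h2 z, add_mul]
  have hPsmul : ∀ (r : ℂ) s c, P s c → P (r • s) (r • c) := by
    intro r s c h1 z
    rw [M.smulC_smulL, map_smul, h1 z, smul_mul_assoc]
  have hPstarQ : ∀ s ∈ (Submodule.span ℂ {a : A | ∃ x y, a = M.innerL x y} : Submodule ℂ A),
      ∃ c, P s c ∧ P (star s) (star c) := by
    intro s hs
    induction hs using Submodule.span_induction with
    | mem b hb =>
      obtain ⟨x, y, rfl⟩ := hb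
      refine ⟨Φ x * star (Φ y), hgenP x y, ?_⟩
      rw [M.innerL_conj, star_mul, star_star]
      exact hgenP y x
    | zero => exact ⟨0, hP0, by simpa using hP0⟩
    | add x y hx hy ihx ihy =>
      obtain ⟨c, h1, h2⟩ := ihx
      obtain ⟨d, h3, h4⟩ := ihy
      exact ⟨c + d, hPadd _ _ _ _ h1 h3, by
        rw [star_add, star_add]; exact hPadd _ _ _ _ h2 h4⟩
    | smul r x hx ihx =>
      obtain ⟨c, h1, h2⟩ := ihx
      exact ⟨r • c, hPsmul r _ _ h1, by
        rw [star_smul, star_smul]; exact hPsmul _ _ _ h2⟩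
  have exB : ∀ a : A, ∃ s, s ∈ (Submodule.span ℂ {a : A | ∃ x y, a = M.innerL x y} :
      Submodule ℂ A) ∧ P s a := by
    intro a
    have ha : a ∈ Submodule.span ℂ {x : A | ∃ y z, x = y * z} := by
      rw [span_products_eq_top]; trivial
    induction ha using Submodule.span_induction with
    | mem b hb =>
      obtain ⟨u, v, rfl⟩ := hb
      refine ⟨M.innerL (Φ.symm u) (Φ.symm (star v)),
        Submodule.subset_span ⟨_, _, rfl⟩, ?_⟩
      have hG := hgenP (Φ.symm u) (Φ.symm (star v))
      rwa [Φ.apply_symm_apply, Φ.apply_symm_apply, star_star] at hG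
    | zero => exact ⟨0, Submodule.zero_mem _, hP0⟩
    | add x y hx hy ihx ihy =>
      obtain ⟨s, hs, h1⟩ := ihx
      obtain ⟨t, ht, h2⟩ := ihy
      exact ⟨s + t, Submodule.add_mem _ hs ht, hPadd _ _ _ _ h1 h2⟩
    | smul r x hx ihx =>
      obtain ⟨s, hs, h1⟩ := ihx
      exact ⟨r • s, Submodule.smul_mem _ _ hs, hPsmul _ _ _ h1⟩
  set γ : A → A := fun a => (exB a).choose with hγdef
  have hγS : ∀ a, γ a ∈ (Submodule.span ℂ {a : A | ∃ x y, a = M.innerL x y} :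
      Submodule ℂ A) := fun a => (exB a).choose_spec.1
  have hγP : ∀ a, P (γ a) a := fun a => (exB a).choose_spec.2
  have γadd : ∀ a b, γ (a + b) = γ a + γ b := fun a b =>
    uniqsP _ _ _ (hγP (a + b)) (hPadd _ _ _ _ (hγP a) (hγP b))
  have γsmul : ∀ (r : ℂ) a, γ (r • a) = r • γ a := fun r a =>
    uniqsP _ _ _ (hγP _) (hPsmul r _ _ (hγP a))
  have γzero : γ 0 = 0 := uniqsP _ _ _ (hγP 0) hP0
  have γmul : ∀ a b, γ (a * b) = γ a * γ b := by
    intro a b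
    refine uniqsP _ _ _ (hγP (a * b)) fun z => ?_
    rw [M.smulL_mul, hγP a (M.smulL (γ b) z), hγP b z, mul_assoc]
  have γstar : ∀ a, γ (star a) = star (γ a) := by
    intro a
    obtain ⟨c, h1, h2⟩ := hPstarQ (γ a) (hγS a)
    have hca : c = a := uniqcP _ _ _ h1 (hγP a)
    rw [hca] at h2
    exact uniqsP _ _ _ (hγP (star a)) h2
  have γinj : Function.Injective γ := by
    intro a b hab
    refine uniqcP (γ a) a b (hγP a) ?_
    rw [hab]
    exact hγP b
  let γhom : A →⋆ₙₐ[ℂ] A :=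
    { toFun := γ
      map_smul' := γsmul
      map_zero' := γzero
      map_add' := γadd
      map_mul' := γmul
      map_star' := γstar }
  have γhom_inj : Function.Injective γhom := γinj
  have hisoγ : Isometry γhom := NonUnitalStarAlgHom.isometry γhom γhom_inj
  have hclosed : IsClosed (Set.range γ) := hisoγ.isClosedEmbedding.isClosed_range
  have hrange : Set.range γ = ((Submodule.span ℂ {a : A | ∃ x y, a = M.innerL x y} :
      Submodule ℂ A) : Set A) := by
    apply Set.Subset.antisymm
    · rintro _ ⟨a, rfl⟩
      exact hγS a
    · intro s hs
      obtain ⟨c, h1, _⟩ := hPstarQ s hs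
      exact ⟨c, uniqsP _ _ _ (hγP c) h1⟩
  have γsurj : Function.Surjective γ := by
    intro s
    have hs : s ∈ Set.range γ := by
      rw [hrange]
      have hcl : IsClosed ((Submodule.span ℂ {a : A | ∃ x y, a = M.innerL x y} :
          Submodule ℂ A) : Set A) := hrange ▸ hclosed
      have huniv := hdense.closure_eq
      rw [hcl.closure_eq] at huniv
      rw [huniv]
      trivial
    exact hs
  let α : A ≃⋆ₐ[ℂ] A := StarAlgEquiv.ofBijective γhom ⟨γinj, γsurj⟩
  have hα : ∀ a, α a = γ a := fun _ => rfl
  have hαsymm : ∀ a, α.symm (γ a) = a := fun a => α.symm_apply_apply a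
  let e := Equiv.ofBijective γ ⟨γinj, γsurj⟩
  let γlin : A ≃ₗ[ℂ] A :=
    { toFun := γ
      map_add' := γadd
      map_smul' := γsmul
      invFun := e.symm
      left_inv := e.left_inv
      right_inv := e.right_inv }
  refine ⟨α, Φ.trans γlin, ?_, ?_, ?_, ?_⟩
  · intro x a
    show γ (Φ (M.smulR x a)) = γ (Φ x) * α a
    rw [hR, γmul, hα]
  · intro a x
    obtain ⟨c, rfl⟩ := γsurj a
    show γ (Φ (M.smulL (γ c) x)) = γ c * γ (Φ x)
    rw [hγP c x, γmul]
  · intro x y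
    show α.symm (star (γ (Φ x)) * γ (Φ y)) = M.inner x y
    rw [← γstar, ← γmul, hαsymm, hI]
  · intro x y
    show γ (Φ x) * star (γ (Φ y)) = M.innerL x y
    rw [← γstar, ← γmul]
    exact uniqsP _ _ _ (hγP _) (hgenP x y)


end Paper
end
end

section
/- Let A be a separable C*-algebra whose tracial state space T_1(A) is non-empty and compact, let {h_m} be a countable approximate unit for A, and let ε > 0. Then there exists N ∈ N such that for every m ≥ N and for every sequence (f_n) of positive contractions in A, max_{τ ∈ T_1(A)} |τ(f_n) − τ(h_m f_n)| < ε for all n. In particular, lim_{n→∞} max_{τ ∈ T_1(A)} |τ(h_n f_n) − τ(f_n)| = 0. -/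
open scoped MultiplierAlgebra Kronecker
open Filter Topology
open scoped ENNReal NNReal

set_option linter.unusedSectionVars false
set_option synthInstance.maxHeartbeats 1000000
set_option maxHeartbeats 1000000

noncomputable section

universe u v w

namespace Paper
/-! ### Tracial states as a weak-* compact set, central sequences -/

section BTS
variable {A : Type u} [NonUnitalCStarAlgebra A] [PartialOrder A] [StarOrderedRing A]


variable (A) in
/-- The tracial state space `T_1(A)` inside the weak-* dual. -/
def tracialStateSet : Set (WeakDual ℂ A) :=
  {φ | (∀ a b : A, φ (a * b) = φ (b * a)) ∧
    (∀ a : A, 0 ≤ a → 0 ≤ (φ a).re ∧ (φ a).im = 0) ∧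
    ‖WeakDual.toStrongDual φ‖ = 1}

/-- A norm-central sequence in `A`. -/
def IsCentralSeq (f : ℕ → A) : Prop :=
  ∀ a : A, Tendsto (fun n => ‖f n * a - a * f n‖) atTop (𝓝 0)

/-- Real powers of a positive element, via the non-unital continuous functional calculus. -/
def cpow (a : A) (r : ℝ) : A := cfcₙ (fun t : ℝ => t ^ r) a

/-- The canonical extension of a (tracial) state to the unitization. -/
def extendTrace (φ : WeakDual ℂ A) (x : Unitization ℂ A) : ℂ := φ x.snd + x.fst

/-- The pair of central sequences appearing in the definition of excision in small central
sequences and of property (SI): `(e_n)` is a positive central sequence which is small in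
trace, `(f_n)` is a positive central sequence with `lim_m liminf_n min_τ τ(f_n^m) > 0`. -/
def SmallTracePair (e f : ℕ → A) : Prop :=
  IsCentralSeq e ∧ (∀ n, 0 ≤ e n ∧ ‖e n‖ ≤ 1) ∧
  IsCentralSeq f ∧ (∀ n, 0 ≤ f n ∧ ‖f n‖ ≤ 1) ∧
  Tendsto (fun n => sSup ((fun φ : WeakDual ℂ A => (φ (e n)).re) '' tracialStateSet A))
    atTop (𝓝 0) ∧
  ∃ L : ℝ, 0 < L ∧
    Tendsto (fun m : ℕ =>
        Filter.liminf (fun n =>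
          sInf ((fun φ : WeakDual ℂ A => (φ (cpow (f n) (m : ℝ))).re) '' tracialStateSet A))
          atTop)
      atTop (𝓝 L)

/-- A completely positive map `φ : Ã → Ã` can be excised in small central sequences. -/
def CanBeExcised (φ : Unitization ℂ A →ₗ[ℂ] Unitization ℂ A) : Prop :=
  ∀ e f : ℕ → A, SmallTracePair e f →
    ∃ s : ℕ → A,
      (∀ x : Unitization ℂ A,
        Tendsto (fun n => ‖star ((s n : Unitization ℂ A)) * x * ((s n : Unitization ℂ A)) -
          φ x * ((e n : Unitization ℂ A))‖) atTop (𝓝 0)) ∧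
      Tendsto (fun n => ‖f n * s n - s n‖) atTop (𝓝 0)


end BTS

end Paper

section Helpers
open ComplexStarModule

namespace PaperAux

variable {A : Type u} [NonUnitalCStarAlgebra A] [PartialOrder A] [StarOrderedRing A]
variable (φ : WeakDual ℂ A)

/-- positivity hypothesis -/
def Pos : Prop := ∀ a : A, 0 ≤ a → 0 ≤ (φ a).re ∧ (φ a).im = 0

variable {φ}

lemma eq_re_of_nonneg (hp : Pos φ) {a : A} (ha : 0 ≤ a) : φ a = ((φ a).re : ℂ) :=
  Complex.ext (by simp) (by simp [(hp a ha).2])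

lemma re_mono (hp : Pos φ) {a b : A} (hab : a ≤ b) : (φ a).re ≤ (φ b).re := by
  have h := (hp _ (sub_nonneg.2 hab)).1
  rw [map_sub] at h
  simp only [Complex.sub_re] at h
  linarith

lemma im_eq_zero_of_isSelfAdjoint (hp : Pos φ) {a : A} (ha : IsSelfAdjoint a) :
    (φ a).im = 0 := by
  rw [← CFC.posPart_sub_negPart a ha, map_sub]
  simp [Complex.sub_im, (hp _ (CFC.posPart_nonneg a)).2, (hp _ (CFC.negPart_nonneg a)).2]

lemma map_star_eq_conj (hp : Pos φ) (x : A) : φ (star x) = starRingEnd ℂ (φ x) := by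
  have hsa : ∀ a : A, IsSelfAdjoint a → φ a = ((φ a).re : ℂ) := fun a ha =>
    Complex.ext (by simp) (by simp [im_eq_zero_of_isSelfAdjoint hp ha])
  have hx : x = (ℜ x : A) + Complex.I • (ℑ x : A) := (realPart_add_I_smul_imaginaryPart x).symm
  have hsx : star x = (ℜ x : A) - Complex.I • (ℑ x : A) := by
    nth_rw 1 [hx]
    rw [star_add, star_smul]
    simp [(ℜ x).2.star_eq, (ℑ x).2.star_eq, sub_eq_add_neg]
  have h1 : φ (star x) = φ (ℜ x : A) - Complex.I * φ (ℑ x : A) := by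
    rw [hsx, map_sub, map_smul, smul_eq_mul]
  have h2 : φ x = φ (ℜ x : A) + Complex.I * φ (ℑ x : A) := by
    nth_rw 1 [hx]
    rw [map_add, map_smul, smul_eq_mul]
  rw [h1, h2, hsa _ (ℜ x).2, hsa _ (ℑ x).2]
  simp [Complex.ext_iff]

lemma cauchy_schwarz (hp : Pos φ) (a b : A) :
    ‖φ (star a * b)‖ ^ 2 ≤ (φ (star a * a)).re * (φ (star b * b)).re := by
  set α := φ (star a * b) with hα
  set Ar := (φ (star a * a)).re with hAr
  set Br := (φ (star b * b)).re with hBr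
  have hA0 : 0 ≤ Ar := (hp _ (star_mul_self_nonneg a)).1
  have hB0 : 0 ≤ Br := (hp _ (star_mul_self_nonneg b)).1
  rcases eq_or_ne α 0 with h0 | h0
  · simpa [h0] using mul_nonneg hA0 hB0
  have habs : 0 < ‖α‖ := norm_pos_iff.mpr h0
  have key : ∀ t : ℝ, 0 ≤ (‖α‖ ^ 2 * Ar) * (t * t) + (-(2 * ‖α‖ ^ 2)) * t + Br := by
    intro t
    set μ : ℂ := (-t : ℂ) * α with hμ
    have hpos := (hp _ (star_mul_self_nonneg (μ • a + b))).1
    have hexp : star (μ • a + b) * (μ • a + b)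
        = (μ * star μ) • (star a * a) + (star μ • (star a * b) + μ • (star b * a))
          + star b * b := by
      rw [star_add, star_smul]
      simp only [smul_add, add_mul, mul_add, smul_mul_assoc, mul_smul_comm, smul_smul]
      abel
    have hba : φ (star b * a) = starRingEnd ℂ α := by
      rw [show star b * a = star (star a * b) by simp [star_mul], map_star_eq_conj hp]
    have hφ : φ (star (μ • a + b) * (μ • a + b))
        = (μ * star μ) * φ (star a * a) + (star μ * α + μ * starRingEnd ℂ α)
          + φ (star b * b) := by
      rw [hexp, map_add, map_add, map_add, map_smul, map_smul, map_smul, hba]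
      simp [smul_eq_mul, ← hα]
    have h1 : α * (starRingEnd ℂ) α = ((‖α‖ : ℂ)) ^ 2 := by
      rw [Complex.mul_conj, ← Complex.sq_norm]
      push_cast
      ring
    have e1 : μ * star μ = ((t * t * ‖α‖ ^ 2 : ℝ) : ℂ) := by
      rw [show star μ = starRingEnd ℂ μ from rfl, Complex.mul_conj]
      have h2 : Complex.normSq μ = t * t * ‖α‖ ^ 2 := by
        rw [hμ, Complex.normSq_mul, ← Complex.sq_norm α]
        simp [Complex.normSq_ofReal]
      rw [h2]
    have e2 : star μ * α + μ * starRingEnd ℂ α = ((-(2 * t) * ‖α‖ ^ 2 : ℝ) : ℂ) := by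
      rw [hμ, star_mul', show star α = starRingEnd ℂ α from rfl,
        show star (-(t:ℂ)) = -(t:ℂ) by simp]
      push_cast
      linear_combination (-2 * (t:ℂ)) * h1 + (-(t:ℂ)) * (mul_comm ((starRingEnd ℂ) α) α)
    rw [e1, e2] at hφ
    rw [hφ] at hpos
    have hAim : (φ (star a * a)).im = 0 := (hp _ (star_mul_self_nonneg a)).2
    simp only [Complex.add_re, Complex.mul_re, Complex.ofReal_re, Complex.ofReal_im, hAim,
      mul_zero, zero_mul, sub_zero, zero_sub, neg_zero, add_zero] at hpos
    rw [← hAr, ← hBr] at hpos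
    nlinarith [hpos]
  have hd := discrim_le_zero key
  rw [discrim] at hd
  have hx : 0 < ‖α‖ ^ 2 := by positivity
  nlinarith [hd, hx]

lemma smul_le_self_of_le_one {x : A} (hx : 0 ≤ x) {r : ℝ} (hr1 : r ≤ 1) (hr0 : 0 ≤ r) :
    r • x ≤ x := by
  have h := smul_nonneg (sub_nonneg.2 hr1) hx
  rw [sub_smul, one_smul] at h
  exact sub_nonneg.1 h

lemma mul_self_le_self {x : A} (hx : 0 ≤ x) (hx1 : ‖x‖ ≤ 1) : x * x ≤ x := by
  set l := CFC.sqrt x with hl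
  have hll : l * l = x := CFC.sqrt_mul_sqrt_self x hx
  have hl0 : (0 : A) ≤ l := CFC.sqrt_nonneg _
  have hlsa : star l = l := (IsSelfAdjoint.of_nonneg hl0).star_eq
  have hxsa : IsSelfAdjoint x := IsSelfAdjoint.of_nonneg hx
  have h1 : x * x = star l * x * l := by
    rw [hlsa, ← hll]
    noncomm_ring
  have h2 : star l * x * l ≤ ‖x‖ • (star l * l) := CStarAlgebra.star_left_conjugate_le_norm_smul hxsa
  rw [show star l * l = x by rw [hlsa, hll]] at h2
  rw [h1]
  exact h2.trans (smul_le_self_of_le_one hx hx1 (norm_nonneg x))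

lemma trace_mul_nonneg_le (hp : Pos φ) (htr : ∀ a b : A, φ (a * b) = φ (b * a))
    {k f : A} (hk : 0 ≤ k) (hf : 0 ≤ f) (hf1 : ‖f‖ ≤ 1) :
    (φ (k * f)).im = 0 ∧ 0 ≤ (φ (k * f)).re ∧ (φ (k * f)).re ≤ (φ k).re := by
  set l := CFC.sqrt k with hl
  have hll : l * l = k := CFC.sqrt_mul_sqrt_self k hk
  have hl0 : (0 : A) ≤ l := CFC.sqrt_nonneg _
  have hlsa : star l = l := (IsSelfAdjoint.of_nonneg hl0).star_eq
  have hfsa : IsSelfAdjoint f := IsSelfAdjoint.of_nonneg hf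
  have h1 : φ (k * f) = φ (star l * f * l) := by
    rw [hlsa, ← hll, mul_assoc, htr l (l * f), mul_assoc]
  have h2 : (0 : A) ≤ star l * f * l := star_left_conjugate_nonneg hf l
  have h3 : star l * f * l ≤ ‖f‖ • k := by
    have h := CStarAlgebra.star_left_conjugate_le_norm_smul (a := l) (b := f) hfsa
    rwa [show star l * l = k by rw [hlsa, hll]] at h
  have h4 : star l * f * l ≤ k := h3.trans (smul_le_self_of_le_one hk hf1 (norm_nonneg f))
  refine ⟨by rw [h1]; exact (hp _ h2).2, by rw [h1]; exact (hp _ h2).1, ?_⟩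
  rw [h1]
  exact re_mono hp h4

lemma abs_apply_le_norm (hn : ‖WeakDual.toStrongDual φ‖ = 1) (a : A) :
    ‖φ a‖ ≤ ‖a‖ := by
  have h := (WeakDual.toStrongDual φ).le_opNorm a
  rw [hn, one_mul] at h
  simpa using h

section Main

variable (hp : Pos φ) (htr : ∀ a b : A, φ (a * b) = φ (b * a))
  (hn : ‖WeakDual.toStrongDual φ‖ = 1)
  (h : ℕ → A) (hpos : ∀ m, 0 ≤ h m ∧ ‖h m‖ ≤ 1) (hmono : Monotone h)
  (happrox : ∀ a : A, Tendsto (fun m => h m * a) atTop (𝓝 a))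

include hp hn hpos happrox in
lemma tendsto_apply_mul (a : A) :
    Tendsto (fun m => φ (h m * a)) atTop (𝓝 (φ a)) := by
  have hcont : Continuous φ := (WeakDual.toStrongDual φ).continuous
  exact (hcont.tendsto a).comp (happrox a)

include hp hn hpos hmono happrox in
lemma tendsto_re_one : Tendsto (fun m => (φ (h m)).re) atTop (𝓝 1) := by
  set u : ℕ → ℝ := fun m => (φ (h m)).re with hu
  have humono : Monotone u := fun i j hij => re_mono hp (hmono hij)
  have hub : ∀ m, u m ≤ 1 := fun m =>
    (Complex.re_le_norm _).trans ((abs_apply_le_norm hn (h m)).trans (hpos m).2)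
  have hbdd : BddAbove (Set.range u) := ⟨1, by rintro x ⟨m, rfl⟩; exact hub m⟩
  set c := ⨆ m, u m with hc
  have htend : Tendsto u atTop (𝓝 c) := tendsto_atTop_ciSup humono hbdd
  have hc1 : c ≤ 1 := ciSup_le hub
  have hc0 : 0 ≤ c := le_trans (hp _ (hpos 0).1).1 (le_ciSup hbdd 0)
  have claim : ∀ a : A, ‖φ a‖ ≤ Real.sqrt c * ‖a‖ := by
    intro a
    have hterm : ∀ m, ‖φ (h m * a)‖ ^ 2 ≤ c * ‖a‖ ^ 2 := by
      intro m
      have hsa : star (h m) = h m := (IsSelfAdjoint.of_nonneg (hpos m).1).star_eq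
      have hcs := cauchy_schwarz hp (h m) a
      rw [hsa] at hcs
      have h1 : (φ (h m * h m)).re ≤ c := by
        refine le_trans (re_mono hp (mul_self_le_self (hpos m).1 (hpos m).2)) ?_
        exact le_ciSup hbdd m
      have h2 : (φ (star a * a)).re ≤ ‖a‖ ^ 2 := by
        refine (Complex.re_le_norm _).trans ((abs_apply_le_norm hn _).trans ?_)
        rw [CStarRing.norm_star_mul_self]
        rw [sq]
      refine hcs.trans ?_
      have h10 : 0 ≤ (φ (h m * h m)).re := by
        have := (hp _ (star_mul_self_nonneg (h m))).1
        rwa [hsa] at this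
      exact mul_le_mul h1 h2 (hp _ (star_mul_self_nonneg a)).1 hc0
    have hlim : Tendsto (fun m => ‖φ (h m * a)‖ ^ 2) atTop
        (𝓝 (‖φ a‖ ^ 2)) := by
      have h1 := tendsto_apply_mul hp hn h hpos happrox a
      exact ((continuous_norm.pow 2).tendsto _).comp h1
    have hsq : ‖φ a‖ ^ 2 ≤ c * ‖a‖ ^ 2 :=
      le_of_tendsto hlim (Filter.Eventually.of_forall hterm)
    calc ‖φ a‖ = Real.sqrt (‖φ a‖ ^ 2) :=
          (Real.sqrt_sq (norm_nonneg _)).symm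
      _ ≤ Real.sqrt (c * ‖a‖ ^ 2) := Real.sqrt_le_sqrt hsq
      _ = Real.sqrt c * ‖a‖ := by
          rw [Real.sqrt_mul hc0, Real.sqrt_sq (norm_nonneg a)]
  have hop : ‖WeakDual.toStrongDual φ‖ ≤ Real.sqrt c := by
    refine ContinuousLinearMap.opNorm_le_bound _ (Real.sqrt_nonneg c) fun a => ?_
    simpa using claim a
  rw [hn] at hop
  have : c = 1 := by
    have := Real.sq_sqrt hc0
    nlinarith [Real.sqrt_nonneg c]
  rwa [this] at htend

include hp htr hn hpos hmono happrox in
lemma main_estimate {f : A} (hf : 0 ≤ f) (hf1 : ‖f‖ ≤ 1) (m : ℕ) :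
    (φ f).im = 0 ∧ (φ (h m * f)).im = 0 ∧
      0 ≤ (φ f).re - (φ (h m * f)).re ∧
      (φ f).re - (φ (h m * f)).re ≤ 1 - (φ (h m)).re := by
  have him : ∀ M, (φ (h M * f)).im = 0 := fun M =>
    (trace_mul_nonneg_le hp htr (hpos M).1 hf hf1).1
  have hlim := tendsto_apply_mul hp hn h hpos happrox f
  have hlim_re : Tendsto (fun M => (φ (h M * f)).re) atTop (𝓝 (φ f).re) :=
    (Complex.continuous_re.tendsto _).comp hlim
  have hlim_im : Tendsto (fun M => (φ (h M * f)).im) atTop (𝓝 (φ f).im) :=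
    (Complex.continuous_im.tendsto _).comp hlim
  have hfim : (φ f).im = 0 := by
    have h0 : Tendsto (fun _ : ℕ => (0 : ℝ)) atTop (𝓝 (φ f).im) := hlim_im.congr him
    exact tendsto_nhds_unique h0 tendsto_const_nhds
  have hstep : ∀ M, m ≤ M →
      0 ≤ (φ (h M * f)).re - (φ (h m * f)).re ∧
        (φ (h M * f)).re - (φ (h m * f)).re ≤ 1 - (φ (h m)).re := by
    intro M hM
    have hk : (0 : A) ≤ h M - h m := sub_nonneg.2 (hmono hM)
    have hkey := trace_mul_nonneg_le hp htr hk hf hf1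
    have hsub : φ ((h M - h m) * f) = φ (h M * f) - φ (h m * f) := by
      rw [sub_mul, map_sub]
    have hsub2 : φ (h M - h m) = φ (h M) - φ (h m) := map_sub φ _ _
    rw [hsub] at hkey
    rw [hsub2] at hkey
    simp only [Complex.sub_re] at hkey
    have hM1 : (φ (h M)).re ≤ 1 :=
      (Complex.re_le_norm _).trans ((abs_apply_le_norm hn (h M)).trans (hpos M).2)
    exact ⟨hkey.2.1, hkey.2.2.trans (by linarith)⟩
  constructor
  · exact hfim
  refine ⟨him m, ?_, ?_⟩
  · have : Tendsto (fun M => (φ (h M * f)).re - (φ (h m * f)).re) atTop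
        (𝓝 ((φ f).re - (φ (h m * f)).re)) := hlim_re.sub tendsto_const_nhds
    refine ge_of_tendsto this ?_
    filter_upwards [eventually_ge_atTop m] with M hM using (hstep M hM).1
  · have : Tendsto (fun M => (φ (h M * f)).re - (φ (h m * f)).re) atTop
        (𝓝 ((φ f).re - (φ (h m * f)).re)) := hlim_re.sub tendsto_const_nhds
    refine le_of_tendsto this ?_
    filter_upwards [eventually_ge_atTop m] with M hM using (hstep M hM).2

end Main

end PaperAux

end Helpers

namespace Paper

/-- **Proposition 5.3.**  Let `A` be separable with non-empty compact tracial state space,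
and let `(h_m)` be a countable approximate unit for `A`.  For every `ε > 0` there is `N`
such that for all `m ≥ N` and every sequence `(f_n)` of positive contractions,
`max_τ |τ(f_n) - τ(h_m f_n)| < ε` for all `n`; in particular
`lim_n max_τ |τ(h_n f_n) - τ(f_n)| = 0`. -/
theorem approximate_unit_trace_uniform
    {A : Type u} [NonUnitalCStarAlgebra A] [PartialOrder A] [StarOrderedRing A]
    (hsep : TopologicalSpace.SeparableSpace A)
    (hne : (tracialStateSet A).Nonempty) (hcomp : IsCompact (tracialStateSet A))
    (h : ℕ → A) (hpos : ∀ m, 0 ≤ h m ∧ ‖h m‖ ≤ 1) (hmono : Monotone h)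
    (happrox : ∀ a : A, Tendsto (fun m => h m * a) atTop (𝓝 a)) :
    (∀ ε : ℝ, 0 < ε → ∃ N : ℕ, ∀ m ≥ N, ∀ f : ℕ → A, (∀ n, 0 ≤ f n ∧ ‖f n‖ ≤ 1) →
      ∀ n : ℕ, ∀ φ ∈ tracialStateSet A, ‖φ (f n) - φ (h m * f n)‖ < ε) ∧
    ∀ f : ℕ → A, (∀ n, 0 ≤ f n ∧ ‖f n‖ ≤ 1) →
      Tendsto (fun n => sSup ((fun φ : WeakDual ℂ A =>
        ‖φ (h n * f n) - φ (f n)‖) '' tracialStateSet A)) atTop (𝓝 0) := by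
  classical
  have part1 : ∀ ε : ℝ, 0 < ε → ∃ N : ℕ, ∀ m ≥ N, ∀ f : ℕ → A, (∀ n, 0 ≤ f n ∧ ‖f n‖ ≤ 1) →
      ∀ n : ℕ, ∀ φ ∈ tracialStateSet A, ‖φ (f n) - φ (h m * f n)‖ < ε := by
    intro ε hε
    set U : ℕ → Set (WeakDual ℂ A) := fun m => {ψ | 1 - ε < (ψ (h m)).re} with hU
    have hUopen : ∀ m, IsOpen (U m) := fun m =>
      isOpen_lt continuous_const (Complex.continuous_re.comp (WeakDual.eval_continuous (h m)))
    have hcover : tracialStateSet A ⊆ ⋃ m, U m := by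
      intro φ hφ
      obtain ⟨htr, hp, hn⟩ := hφ
      have htend := PaperAux.tendsto_re_one (φ := φ) hp hn h hpos hmono happrox
      have hev : ∀ᶠ m in atTop, 1 - ε < (φ (h m)).re :=
        htend.eventually (lt_mem_nhds (by linarith))
      obtain ⟨m, hm⟩ := hev.exists
      exact Set.mem_iUnion.2 ⟨m, hm⟩
    obtain ⟨t, ht⟩ := hcomp.elim_finite_subcover U hUopen hcover
    refine ⟨t.sup id, fun m hm f hf n φ hφ => ?_⟩
    have hmem := ht hφ
    obtain ⟨htr, hp, hn⟩ := hφ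
    rw [Set.mem_iUnion₂] at hmem
    obtain ⟨i, hit, hi⟩ := hmem
    have him : i ≤ m := le_trans (Finset.le_sup (f := id) hit) hm
    have hlt : 1 - ε < (φ (h m)).re :=
      lt_of_lt_of_le hi (PaperAux.re_mono hp (hmono him))
    obtain ⟨i1, i2, d0, dle⟩ :=
      PaperAux.main_estimate (φ := φ) hp htr hn h hpos hmono happrox (hf n).1 (hf n).2 m
    have heq : φ (f n) - φ (h m * f n)
        = (((φ (f n)).re - (φ (h m * f n)).re : ℝ) : ℂ) := by
      apply Complex.ext <;> simp [i1, i2]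
    rw [heq, Complex.norm_real, Real.norm_eq_abs, abs_of_nonneg d0]
    linarith
  refine ⟨part1, ?_⟩
  intro f hf
  rw [Metric.tendsto_atTop]
  intro ε hε
  obtain ⟨N, hN⟩ := part1 (ε / 2) (by linarith)
  refine ⟨N, fun n hn => ?_⟩
  set S : Set ℝ := (fun φ : WeakDual ℂ A =>
    ‖φ (h n * f n) - φ (f n)‖) '' tracialStateSet A with hS
  have hSne : S.Nonempty := hne.image _
  have hbound : ∀ x ∈ S, x ≤ ε / 2 := by
    rintro x ⟨φ, hφ, rfl⟩
    have hlt := hN n hn f hf n φ hφ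
    show ‖φ (h n * f n) - φ (f n)‖ ≤ ε / 2
    rw [norm_sub_rev]
    exact le_of_lt hlt
  have hbdd : BddAbove S := ⟨ε / 2, hbound⟩
  have hle : sSup S ≤ ε / 2 := csSup_le hSne hbound
  have hge : 0 ≤ sSup S := by
    obtain ⟨x, hx⟩ := hSne
    obtain ⟨φ, hφ, rfl⟩ := hx
    exact le_trans (norm_nonneg _) (le_csSup hbdd ⟨φ, hφ, rfl⟩)
  rw [Real.dist_eq, sub_zero, abs_of_nonneg hge]
  linarith

end Paper
end
end

section
/- Let A be a separable C*-algebra whose tracial state space T_1(A) is non-empty and compact, let c be a positive element in A and θ ∈ R. Then for every central sequence (f_n) of positive contractions in A, limsup_{n→∞} max_{τ ∈ T_1(A)} |τ(c f_n) − θ τ(f_n)| ≤ 2 max_{τ ∈ T_1(A)} |τ(c) − θ|. -/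
open scoped MultiplierAlgebra Kronecker
open Filter Topology
open scoped ENNReal NNReal

set_option linter.unusedSectionVars false
set_option synthInstance.maxHeartbeats 1000000
set_option maxHeartbeats 1000000

noncomputable section

universe u v w

namespace Paper
lemma cs_abstract {R : Type*} [NonUnitalRing R] [StarRing R] [Module ℂ R]
    [IsScalarTower ℂ R R] [SMulCommClass ℂ R R] [StarModule ℂ R]
    (ψ : R → ℂ) (hadd : ∀ x y, ψ (x + y) = ψ x + ψ y)
    (hsmul : ∀ (t : ℂ) x, ψ (t • x) = t * ψ x)
    (hpos : ∀ x, 0 ≤ (ψ (star x * x)).re ∧ (ψ (star x * x)).im = 0)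
    (x y : R) :
    ‖ψ (star y * x)‖ ^ 2 ≤ (ψ (star x * x)).re * (ψ (star y * y)).re := by
  have expand : ∀ s t : ℂ, ψ (star (s • x + t • y) * (s • x + t • y)) =
      (star s * s) * ψ (star x * x) + (star s * t) * ψ (star x * y)
      + (star t * s) * ψ (star y * x) + (star t * t) * ψ (star y * y) := by
    intro s t
    have h : star (s • x + t • y) * (s • x + t • y) =
        (star s * s) • (star x * x) + ((star s * t) • (star x * y)
        + ((star t * s) • (star y * x) + (star t * t) • (star y * y))) := by
      simp only [star_add, star_smul, add_mul, mul_add, smul_mul_assoc, mul_smul_comm, smul_smul]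
      module
    rw [h, hadd, hadd, hadd, hsmul, hsmul, hsmul, hsmul]
    ring
  have hxx := (hpos x).2
  have hyy := (hpos y).2
  have him : ψ (star x * y) = starRingEnd ℂ (ψ (star y * x)) := by
    have e1 := (hpos (x + y)).2
    have e2 := (hpos (x + Complex.I • y)).2
    have e1' := expand 1 1
    have e2' := expand 1 Complex.I
    simp only [one_smul] at e1' e2'
    rw [e1'] at e1
    rw [e2'] at e2
    simp only [star_one, one_mul, mul_one, Complex.star_def, Complex.conj_I,
      Complex.add_im, Complex.mul_im, Complex.neg_im, Complex.neg_re, Complex.I_re,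
      Complex.I_im, hxx, hyy, Complex.ext_iff, Complex.conj_re, Complex.conj_im] at e1 e2 ⊢
    constructor <;> nlinarith [e1, e2]
  set b := ψ (star y * x) with hbdef
  rcases eq_or_ne b 0 with h0 | h0
  · rw [h0]
    simpa using mul_nonneg (hpos x).1 (hpos y).1
  · have habs : 0 < ‖b‖ := by simpa using h0
    have key : ∀ s : ℝ, 0 ≤ (ψ (star y * y)).re * (s * s)
        + (2 * ‖b‖ ^ 2) * s + (‖b‖ ^ 2 * (ψ (star x * x)).re) := by
      intro s
      have h := (hpos ((starRingEnd ℂ b) • x + (s : ℂ) • y)).1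
      rw [expand, him] at h
      simp only [Complex.star_def, Complex.conj_conj, Complex.conj_ofReal, Complex.add_re,
        Complex.mul_re, Complex.mul_im, Complex.conj_re, Complex.conj_im, Complex.ofReal_re,
        Complex.ofReal_im, hxx, hyy, mul_zero, zero_mul, sub_zero, add_zero, neg_zero,
        neg_neg, zero_add] at h
      rw [Complex.sq_norm, Complex.normSq_apply]
      nlinarith [h]
    have hd := discrim_le_zero key
    rw [discrim] at hd
    nlinarith [pow_pos habs 2, (hpos x).1, (hpos y).1]


section Helpers
variable {A : Type u} [NonUnitalCStarAlgebra A] [PartialOrder A] [StarOrderedRing A]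

variable {φ : WeakDual ℂ A}

lemma abs_apply_le (hφ : φ ∈ tracialStateSet A) (x : A) : ‖φ x‖ ≤ ‖x‖ := by
  have h := (WeakDual.toStrongDual φ).le_opNorm x
  rw [hφ.2.2, one_mul] at h
  simpa using h

lemma re_monotone (hφ : φ ∈ tracialStateSet A) {u v : A} (h : u ≤ v) :
    (φ u).re ≤ (φ v).re := by
  have h2 := (hφ.2.1 (v - u) (sub_nonneg.2 h)).1
  rw [map_sub] at h2
  simp only [Complex.sub_re] at h2
  linarith

lemma apply_real_smul (φ : WeakDual ℂ A) (r : ℝ) (x : A) : φ (r • x) = (r : ℂ) * φ x := by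
  rw [← algebraMap_smul ℂ r x, map_smul, smul_eq_mul]
  norm_num

lemma star_mul_self_cond (hφ : φ ∈ tracialStateSet A) (z : A) :
    0 ≤ (φ (star z * z)).re ∧ (φ (star z * z)).im = 0 :=
  hφ.2.1 _ (star_mul_self_nonneg z)

lemma trace_mul_sqrt (hφ : φ ∈ tracialStateSet A) {g : A} (hg : 0 ≤ g) (a : A) :
    φ (a * g) = φ (CFC.sqrt g * (a * CFC.sqrt g)) := by
  conv_lhs => rw [← CFC.sqrt_mul_sqrt_self g hg, ← mul_assoc]
  exact hφ.1 (a * CFC.sqrt g) (CFC.sqrt g)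

/-- positivity of `a ↦ φ (a * g)` -/
lemma trace_mul_pos (hφ : φ ∈ tracialStateSet A) {g a : A} (hg : 0 ≤ g) (ha : 0 ≤ a) :
    0 ≤ (φ (a * g)).re ∧ (φ (a * g)).im = 0 := by
  rw [trace_mul_sqrt hφ hg a]
  refine hφ.2.1 _ ?_
  have h := star_left_conjugate_nonneg ha (CFC.sqrt g)
  rwa [(IsSelfAdjoint.of_nonneg (CFC.sqrt_nonneg (a := g))).star_eq, mul_assoc] at h

/-- Cauchy-Schwarz bound: `|φ (a * g)| ≤ ‖a‖ * φ(g)` for `g ≥ 0`. -/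
lemma abs_trace_mul_le (hφ : φ ∈ tracialStateSet A) {g : A} (hg : 0 ≤ g) (a : A) :
    ‖φ (a * g)‖ ≤ ‖a‖ * (φ g).re := by
  set r := CFC.sqrt g with hr
  have hr0 : 0 ≤ r := CFC.sqrt_nonneg (a := g)
  have hrs : star r = r := hr0.isSelfAdjoint.star_eq
  have hrr : r * r = g := CFC.sqrt_mul_sqrt_self g hg
  have cs := cs_abstract (ψ := fun z : A => φ z) (fun u v => map_add φ u v)
    (fun t u => by show φ (t • u) = t * φ u; rw [map_smul, smul_eq_mul]) (fun z => star_mul_self_cond hφ z)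
    (a * r) r
  rw [hrs] at cs
  have e1 : φ (r * (a * r)) = φ (a * g) := (trace_mul_sqrt hφ hg a).symm
  have e2 : star (a * r) * (a * r) = r * ((star a * a) * r) := by
    rw [star_mul, hrs]; noncomm_ring
  have e3 : r * ((star a * a) * r) ≤ ‖star a * a‖ • g := by
    have h := CStarAlgebra.star_left_conjugate_le_norm_smul (a := r) (b := star a * a)
      (IsSelfAdjoint.star_mul_self a)
    rwa [hrs, mul_assoc, hrr] at h
  have e4 : (φ (r * ((star a * a) * r))).re ≤ ‖a‖ * ‖a‖ * (φ g).re := by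
    calc (φ (r * ((star a * a) * r))).re ≤ (φ (‖star a * a‖ • g)).re := re_monotone hφ e3
    _ = ‖star a * a‖ * (φ g).re := by rw [apply_real_smul, Complex.re_ofReal_mul]
    _ = ‖a‖ * ‖a‖ * (φ g).re := by rw [CStarRing.norm_star_mul_self]
  rw [e1, e2] at cs
  have hg0 : 0 ≤ (φ g).re := (hφ.2.1 g hg).1
  have hrr' : (φ (r * r)) = φ g := by rw [hrr]
  rw [hrr'] at cs
  have h5 : ‖φ (a * g)‖ ^ 2 ≤ (‖a‖ * (φ g).re) ^ 2 := by
    nlinarith [mul_le_mul_of_nonneg_right e4 hg0]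
  calc ‖φ (a * g)‖ = Real.sqrt (‖φ (a * g)‖ ^ 2) :=
        (Real.sqrt_sq (norm_nonneg _)).symm
    _ ≤ Real.sqrt ((‖a‖ * (φ g).re) ^ 2) := Real.sqrt_le_sqrt h5
    _ = ‖a‖ * (φ g).re := Real.sqrt_sq (mul_nonneg (norm_nonneg a) hg0)

end Helpers

section Ext
variable {A : Type u} [NonUnitalCStarAlgebra A] [PartialOrder A] [StarOrderedRing A]
variable {φ : WeakDual ℂ A}

lemma extendTrace_add (x y : Unitization ℂ A) :
    extendTrace φ (x + y) = extendTrace φ x + extendTrace φ y := by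
  simp only [extendTrace, Unitization.fst_add, Unitization.snd_add, map_add]; ring

lemma extendTrace_sub (x y : Unitization ℂ A) :
    extendTrace φ (x - y) = extendTrace φ x - extendTrace φ y := by
  simp only [extendTrace, sub_eq_add_neg, Unitization.fst_add, Unitization.snd_add,
    Unitization.fst_neg, Unitization.snd_neg, map_add, map_neg]; ring

lemma extendTrace_smul (t : ℂ) (x : Unitization ℂ A) :
    extendTrace φ (t • x) = t * extendTrace φ x := by
  simp only [extendTrace, Unitization.fst_smul, Unitization.snd_smul, map_smul, smul_eq_mul]; ring

lemma extendTrace_inr (a : A) : extendTrace φ (a : Unitization ℂ A) = φ a := by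
  simp [extendTrace]

lemma extendTrace_one : extendTrace φ (1 : Unitization ℂ A) = 1 := by
  simp [extendTrace]

lemma extendTrace_tracial (hφ : φ ∈ tracialStateSet A) (x y : Unitization ℂ A) :
    extendTrace φ (x * y) = extendTrace φ (y * x) := by
  have h := hφ.1 x.snd y.snd
  simp only [extendTrace, Unitization.fst_mul, Unitization.snd_mul, map_add, map_smul,
    smul_eq_mul, h]
  ring

lemma extendTrace_nonneg (hφ : φ ∈ tracialStateSet A) {x : Unitization ℂ A} (hx : 0 ≤ x) :
    0 ≤ (extendTrace φ x).re ∧ (extendTrace φ x).im = 0 := by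
  have hx_sa : IsSelfAdjoint x := .of_nonneg hx
  set s := CFC.sqrt x with hs
  have hs0 : 0 ≤ s := CFC.sqrt_nonneg (a := x)
  have hss : s * s = x := CFC.sqrt_mul_sqrt_self x hx
  have hsfst : s.fst.im = 0 := by
    have h1 : star s.fst = s.fst := by
      rw [← Unitization.fst_star, (IsSelfAdjoint.of_nonneg hs0).star_eq]
    rw [Complex.star_def, Complex.conj_eq_iff_im] at h1
    exact h1
  set α : ℝ := s.fst.re ^ 2 with hα
  have hxfst : x.fst = (α : ℂ) := by
    rw [← hss, Unitization.fst_mul]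
    have : s.fst = (s.fst.re : ℂ) := by
      apply Complex.ext <;> simp [hsfst]
    rw [this, hα]
    push_cast
    ring
  have hα0 : 0 ≤ α := sq_nonneg _
  set a := x.snd with ha
  have ha_sa : IsSelfAdjoint a := by
    have := congrArg (fun z : Unitization ℂ A => z.snd) hx_sa.star_eq
    rwa [Unitization.snd_star] at this
  -- quasispectrum of a is bounded below by -α
  have hspec : ∀ t ∈ quasispectrum ℝ a, -α ≤ t := by
    intro t ht
    rw [Unitization.quasispectrum_eq_spectrum_inr' ℝ ℂ a] at ht
    have hxa : ((a : Unitization ℂ A)) = algebraMap ℝ (Unitization ℂ A) (-α) + x := by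
      have h1 := Unitization.inl_fst_add_inr_snd_eq x
      have h2 : algebraMap ℝ (Unitization ℂ A) (-α) = Unitization.inl ((-α : ℝ) : ℂ) := by
        rw [IsScalarTower.algebraMap_apply ℝ ℂ (Unitization ℂ A)]
        rfl
      rw [h2, ← h1, hxfst, ← ha, ← add_assoc, ← Unitization.inl_add]
      push_cast
      simp
    rw [hxa, ← spectrum.singleton_add_eq] at ht
    obtain ⟨u, hu, v, hv, rfl⟩ := Set.mem_add.mp ht
    rw [Set.mem_singleton_iff] at hu
    have hv0 : 0 ≤ v := spectrum_nonneg_of_nonneg hx hv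
    rw [hu]
    linarith
  have hneg : ‖a⁻‖ ≤ α := by
    rw [CFC.negPart_def]
    refine norm_cfcₙ_le fun t ht => ?_
    have h1 := hspec t ht
    rw [Real.norm_eq_abs, abs_of_nonneg (negPart_nonneg t)]
    rw [negPart_def]
    simp only [sup_le_iff]
    exact ⟨by linarith, hα0⟩
  have hposP := hφ.2.1 (a⁺) (CFC.posPart_nonneg a)
  have hnegP := hφ.2.1 (a⁻) (CFC.negPart_nonneg a)
  have hdec : φ a = φ (a⁺) - φ (a⁻) := by
    conv_lhs => rw [← CFC.posPart_sub_negPart a ha_sa]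
    rw [map_sub]
  have hnegre : (φ (a⁻)).re ≤ α := by
    calc (φ (a⁻)).re ≤ ‖φ (a⁻)‖ := Complex.re_le_norm _
      _ ≤ ‖(a⁻ : A)‖ := abs_apply_le hφ _
      _ ≤ α := hneg
  have hform : extendTrace φ x = φ a + (α : ℂ) := by
    rw [extendTrace, ← ha, hxfst]
  constructor
  · rw [hform, Complex.add_re, hdec, Complex.sub_re, Complex.ofReal_re]
    linarith [hposP.1]
  · rw [hform, Complex.add_im, hdec, Complex.sub_im, Complex.ofReal_im, hposP.2, hnegP.2]
    ring

lemma extendTrace_re_monotone (hφ : φ ∈ tracialStateSet A) {u v : Unitization ℂ A}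
    (h : u ≤ v) : (extendTrace φ u).re ≤ (extendTrace φ v).re := by
  have h2 := (extendTrace_nonneg hφ (sub_nonneg.2 h)).1
  rw [extendTrace_sub] at h2
  simp only [Complex.sub_re] at h2
  linarith

lemma algebraMap_nonneg' {r : ℝ} (hr : 0 ≤ r) :
    0 ≤ algebraMap ℝ (Unitization ℂ A) r := by
  have h1 : algebraMap ℝ (Unitization ℂ A) r =
      star (algebraMap ℝ (Unitization ℂ A) (Real.sqrt r)) *
        algebraMap ℝ (Unitization ℂ A) (Real.sqrt r) := by
    rw [IsSelfAdjoint.algebraMap _ (isSelfAdjoint_iff.mpr rfl) |>.star_eq, ← map_mul,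
      Real.mul_self_sqrt hr]
  rw [h1]
  exact star_mul_self_nonneg _

lemma inr_le_one {g : A} (hg : 0 ≤ g) (hg1 : ‖g‖ ≤ 1) : (g : Unitization ℂ A) ≤ 1 := by
  have hsa : IsSelfAdjoint ((g : Unitization ℂ A)) :=
    .of_nonneg (Unitization.inr_nonneg_iff.mpr hg)
  have h1 : (g : Unitization ℂ A) ≤ algebraMap ℝ _ ‖(g : Unitization ℂ A)‖ :=
    IsSelfAdjoint.le_algebraMap_norm_self hsa
  refine h1.trans ?_
  have h2 : (0 : Unitization ℂ A) ≤ algebraMap ℝ _ (1 - ‖(g : Unitization ℂ A)‖) := by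
    refine algebraMap_nonneg' ?_
    rw [Unitization.norm_inr]
    linarith
  rw [map_sub, map_one] at h2
  exact sub_nonneg.mp h2

lemma abs_trace_sub_mul_le (hφ : φ ∈ tracialStateSet A) {g : A} (hg : 0 ≤ g) (hg1 : ‖g‖ ≤ 1)
    (a : A) : ‖φ a - φ (a * g)‖ ≤ ‖a‖ * (1 - (φ g).re) := by
  set ψ : Unitization ℂ A → ℂ := extendTrace φ with hψ
  have hψpos : ∀ z : Unitization ℂ A, 0 ≤ (ψ (star z * z)).re ∧ (ψ (star z * z)).im = 0 :=
    fun z => extendTrace_nonneg hφ (star_mul_self_nonneg z)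
  set h : Unitization ℂ A := 1 - (g : Unitization ℂ A) with hh
  have hh0 : (0 : Unitization ℂ A) ≤ h := sub_nonneg.2 (inr_le_one hg hg1)
  set r := CFC.sqrt h with hrdef
  have hr0 : 0 ≤ r := CFC.sqrt_nonneg (a := h)
  have hrs : star r = r := (IsSelfAdjoint.of_nonneg hr0).star_eq
  have hrr : r * r = h := CFC.sqrt_mul_sqrt_self h hh0
  have hψh : ψ h = 1 - φ g := by
    rw [hψ, hh, extendTrace_sub, extendTrace_one, extendTrace_inr]
  have hH0 : 0 ≤ 1 - (φ g).re := by
    have := (extendTrace_nonneg hφ hh0).1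
    rw [← hψ, hψh, Complex.sub_re, Complex.one_re] at this
    linarith
  have key : φ a - φ (a * g) = ψ (star r * ((a : Unitization ℂ A) * r)) := by
    have e0 : (a : Unitization ℂ A) * h = ((a : Unitization ℂ A)) - ((a * g : A) : Unitization ℂ A) := by
      rw [hh, mul_sub, mul_one, Unitization.inr_mul]
    have e1 : ψ ((a : Unitization ℂ A) * h) = φ a - φ (a * g) := by
      rw [hψ, e0, extendTrace_sub, extendTrace_inr, extendTrace_inr]
    rw [← e1, hrs, ← hrr, ← mul_assoc]
    exact extendTrace_tracial hφ _ _
  have cs := cs_abstract (ψ := ψ) (fun u v => extendTrace_add u v)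
    (fun t u => extendTrace_smul t u) hψpos ((a : Unitization ℂ A) * r) r
  rw [hrs] at cs
  have e2 : star ((a : Unitization ℂ A) * r) * ((a : Unitization ℂ A) * r)
      = r * ((star (a : Unitization ℂ A) * (a : Unitization ℂ A)) * r) := by
    rw [star_mul, hrs]; noncomm_ring
  have e3 : r * ((star (a : Unitization ℂ A) * (a : Unitization ℂ A)) * r)
      ≤ (‖a‖ * ‖a‖) • h := by
    have hb := CStarAlgebra.star_left_conjugate_le_norm_smul (a := r)
      (b := star (a : Unitization ℂ A) * (a : Unitization ℂ A))
      (IsSelfAdjoint.star_mul_self _)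
    rw [hrs, mul_assoc, hrr] at hb
    have hnorm : ‖star (a : Unitization ℂ A) * (a : Unitization ℂ A)‖ = ‖a‖ * ‖a‖ := by
      rw [CStarRing.norm_star_mul_self, Unitization.norm_inr]
    rwa [hnorm] at hb
  have e4 : (ψ (r * ((star (a : Unitization ℂ A) * (a : Unitization ℂ A)) * r))).re
      ≤ ‖a‖ * ‖a‖ * (1 - (φ g).re) := by
    calc (ψ (r * ((star (a : Unitization ℂ A) * (a : Unitization ℂ A)) * r))).re
        ≤ (ψ ((‖a‖ * ‖a‖) • h)).re := extendTrace_re_monotone hφ e3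
      _ = ‖a‖ * ‖a‖ * (1 - (φ g).re) := by
          rw [hψ, ← algebraMap_smul ℂ (‖a‖ * ‖a‖) h, extendTrace_smul]
          simp only [← hψ, hψh]
          rw [show (algebraMap ℝ ℂ) (‖a‖ * ‖a‖) = ((‖a‖ * ‖a‖ : ℝ) : ℂ) from rfl]
          rw [Complex.re_ofReal_mul, Complex.sub_re, Complex.one_re]
  rw [e2] at cs
  have hrrψ : ψ (r * r) = 1 - φ g := by rw [hrr, hψh]
  rw [hrs] at key
  rw [hrrψ, ← key] at cs
  have hre : ((1 : ℂ) - φ g).re = 1 - (φ g).re := by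
    rw [Complex.sub_re, Complex.one_re]
  rw [hre] at cs
  have h5 : ‖φ a - φ (a * g)‖ ^ 2 ≤ (‖a‖ * (1 - (φ g).re)) ^ 2 := by
    nlinarith [mul_le_mul_of_nonneg_right e4 hH0]
  calc ‖φ a - φ (a * g)‖ = Real.sqrt (‖φ a - φ (a * g)‖ ^ 2) :=
        (Real.sqrt_sq (norm_nonneg _)).symm
    _ ≤ Real.sqrt ((‖a‖ * (1 - (φ g).re)) ^ 2) := Real.sqrt_le_sqrt h5
    _ = ‖a‖ * (1 - (φ g).re) := Real.sqrt_sq (mul_nonneg (norm_nonneg a) hH0)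

end Ext


/-- **Lemma 5.5.**  Let `A` be separable with non-empty compact tracial state space, let
`c ∈ A₊` and `θ ∈ ℝ`.  For every central sequence `(f_n)` of positive contractions,
`limsup_n max_τ |τ(c f_n) - θ τ(f_n)| ≤ 2 max_τ |τ(c) - θ|`. -/
theorem central_sequence_trace_estimate
    {A : Type u} [NonUnitalCStarAlgebra A] [PartialOrder A] [StarOrderedRing A]
    (hsep : TopologicalSpace.SeparableSpace A)
    (hne : (tracialStateSet A).Nonempty) (hcomp : IsCompact (tracialStateSet A))
    (c : A) (hc : 0 ≤ c) (θ : ℝ)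
    (f : ℕ → A) (hf : IsCentralSeq f) (hfc : ∀ n, 0 ≤ f n ∧ ‖f n‖ ≤ 1) :
    Filter.limsup (fun n => sSup ((fun φ : WeakDual ℂ A =>
        ‖φ (c * f n) - (θ : ℂ) * φ (f n)‖) '' tracialStateSet A)) atTop
      ≤ 2 * sSup ((fun φ : WeakDual ℂ A =>
        ‖φ c - (θ : ℂ)‖) '' tracialStateSet A) := by
  classical
  obtain ⟨φ₀, hφ₀⟩ := hne
  set M : ℝ := sSup ((fun φ : WeakDual ℂ A =>
    ‖φ c - (θ : ℂ)‖) '' tracialStateSet A) with hM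
  have hbddM : BddAbove ((fun φ : WeakDual ℂ A =>
      ‖φ c - (θ : ℂ)‖) '' tracialStateSet A) := by
    refine ⟨‖c‖ + |θ|, ?_⟩
    rintro - ⟨φ, hφ, rfl⟩
    have h1 : ‖φ c - (θ : ℂ)‖ ≤ ‖φ c‖ + ‖(θ : ℂ)‖ := by
      simpa [sub_eq_add_neg] using norm_add_le (φ c) (-(θ : ℂ))
    have h2 := abs_apply_le hφ c
    simp only [Complex.norm_real, Real.norm_eq_abs] at h1
    linarith
  have hMub : ∀ φ ∈ tracialStateSet A, ‖φ c - (θ : ℂ)‖ ≤ M :=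
    fun φ hφ => le_csSup hbddM ⟨φ, hφ, rfl⟩
  have hM0 : 0 ≤ M := le_trans (norm_nonneg _) (hMub φ₀ hφ₀)
  set s : ℕ → ℝ := fun n => sSup ((fun φ : WeakDual ℂ A =>
    ‖φ (c * f n) - (θ : ℂ) * φ (f n)‖) '' tracialStateSet A) with hs
  have himgne : ∀ n, ((fun φ : WeakDual ℂ A =>
      ‖φ (c * f n) - (θ : ℂ) * φ (f n)‖) '' tracialStateSet A).Nonempty :=
    fun n => ⟨_, φ₀, hφ₀, rfl⟩
  have hs0 : ∀ n, 0 ≤ s n := by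
    intro n
    have h1 : ∀ x ∈ ((fun φ : WeakDual ℂ A =>
        ‖φ (c * f n) - (θ : ℂ) * φ (f n)‖) '' tracialStateSet A), 0 ≤ x := by
      rintro - ⟨φ, hφ, rfl⟩; exact norm_nonneg _
    obtain ⟨x, hx⟩ := himgne n
    exact le_csSup_of_le (by
      refine ⟨‖c‖ + |θ| * 1, ?_⟩
      rintro - ⟨φ, hφ, rfl⟩
      have h2 : ‖φ (c * f n) - (θ : ℂ) * φ (f n)‖
          ≤ ‖φ (c * f n)‖ + |θ| * ‖φ (f n)‖ := by
        have := norm_add_le (φ (c * f n)) (-((θ : ℂ) * φ (f n)))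
        simpa [sub_eq_add_neg, norm_mul, Complex.norm_real, Real.norm_eq_abs] using this
      have h3 := abs_apply_le hφ (c * f n)
      have h4 := abs_apply_le hφ (f n)
      have h5 : ‖c * f n‖ ≤ ‖c‖ * 1 :=
        le_trans (norm_mul_le _ _) (by
          have := (hfc n).2
          nlinarith [norm_nonneg c])
      have h6 : |θ| * ‖φ (f n)‖ ≤ |θ| * 1 := by
        have := le_trans h4 (hfc n).2
        nlinarith [abs_nonneg θ, norm_nonneg (φ (f n))]
      nlinarith) hx (h1 x hx)
  have main : ∀ ε > 0, ∀ᶠ n in atTop, s n ≤ 2 * M + ε := by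
    intro ε hε
    by_contra hcon
    rw [Filter.not_eventually] at hcon
    have hfreq : ∃ᶠ n in atTop, 2 * M + ε < s n := hcon.mono fun n hn => lt_of_not_ge hn
    obtain ⟨k, hkmono, hk⟩ := Filter.extraction_of_frequently_atTop hfreq
    have hchoice : ∀ i : ℕ, ∃ φ ∈ tracialStateSet A,
        2 * M + ε < ‖φ (c * f (k i)) - (θ : ℂ) * φ (f (k i))‖ := by
      intro i
      obtain ⟨-, ⟨φ, hφ, rfl⟩, hlt⟩ := exists_lt_of_lt_csSup (himgne (k i)) (hk i)
      exact ⟨φ, hφ, hlt⟩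
    choose τ hτT hτv using hchoice
    have hg0 : ∀ i, 0 ≤ f (k i) := fun i => (hfc (k i)).1
    have hg1 : ∀ i, ‖f (k i)‖ ≤ 1 := fun i => (hfc (k i)).2
    have hcentral : ∀ b : A, Tendsto (fun i => ‖f (k i) * b - b * f (k i)‖) atTop (𝓝 0) :=
      fun b => (hf b).comp hkmono.tendsto_atTop
    let U : Ultrafilter ℕ := Ultrafilter.of atTop
    have hU : (U : Filter ℕ) ≤ (atTop : Filter ℕ) := Ultrafilter.of_le _
    -- limit trace Tinf
    obtain ⟨Tinf, hTinfmem, hTinflim'⟩ := hcomp.ultrafilter_le_nhds (U.map τ) (by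
      rw [Ultrafilter.coe_map, Filter.le_principal_iff, Filter.mem_map]
      exact Filter.univ_mem' fun i => hτT i)
    rw [Ultrafilter.coe_map] at hTinflim'
    have hTinflim : Tendsto τ (U : Filter ℕ) (𝓝 Tinf) := hTinflim'
    -- σ sequence
    let σ : ℕ → WeakDual ℂ A := fun i =>
      StrongDual.toWeakDual
        ((WeakDual.toStrongDual (τ i)).comp ((ContinuousLinearMap.mul ℂ A).flip (f (k i))))
    have hσapp : ∀ i (a : A), σ i a = τ i (a * f (k i)) := fun i a => rfl
    have hσball : ∀ i, σ i ∈ ⇑WeakDual.toStrongDual ⁻¹' Metric.closedBall 0 1 := by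
      intro i
      simp only [Set.mem_preimage, Metric.mem_closedBall, dist_zero_right]
      refine ContinuousLinearMap.opNorm_le_bound _ zero_le_one fun a => ?_
      have h1 : ‖τ i (a * f (k i))‖ ≤ ‖a * f (k i)‖ := abs_apply_le (hτT i) _
      have h2 : ‖a * f (k i)‖ ≤ ‖a‖ * ‖f (k i)‖ := norm_mul_le _ _
      have h3 : ‖a‖ * ‖f (k i)‖ ≤ 1 * ‖a‖ := by
        nlinarith [norm_nonneg a, hg1 i, norm_nonneg (f (k i))]
      rw [show ‖(WeakDual.toStrongDual (σ i)) a‖ = ‖τ i (a * f (k i))‖ from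
        rfl]
      linarith
    obtain ⟨Sinf, hSinfmem, hSinflim'⟩ :=
      (WeakDual.isCompact_closedBall (𝕜 := ℂ) (0 : StrongDual ℂ A) 1).ultrafilter_le_nhds (U.map σ) (by
        rw [Ultrafilter.coe_map, Filter.le_principal_iff, Filter.mem_map]
        exact Filter.univ_mem' fun i => hσball i)
    rw [Ultrafilter.coe_map] at hSinflim'
    have hSinflim : Tendsto σ (U : Filter ℕ) (𝓝 Sinf) := hSinflim'
    -- the masses
    set m : ℕ → ℝ := fun i => (τ i (f (k i))).re with hm
    have hmIcc : ∀ i, m i ∈ Set.Icc (0 : ℝ) 1 := by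
      intro i
      constructor
      · exact ((hτT i).2.1 _ (hg0 i)).1
      · calc m i ≤ ‖τ i (f (k i))‖ := Complex.re_le_norm _
          _ ≤ ‖f (k i)‖ := abs_apply_le (hτT i) _
          _ ≤ 1 := hg1 i
    obtain ⟨μ, hμmem, hμlim'⟩ := (isCompact_Icc (a := (0:ℝ)) (b := 1)).ultrafilter_le_nhds
      (U.map m) (by
        rw [Ultrafilter.coe_map, Filter.le_principal_iff, Filter.mem_map]
        exact Filter.univ_mem' fun i => hmIcc i)
    rw [Ultrafilter.coe_map] at hμlim'
    have hμlim : Tendsto m (U : Filter ℕ) (𝓝 μ) := hμlim'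
    -- pointwise limits
    have hTev : ∀ a : A, Tendsto (fun i => τ i a) (U : Filter ℕ) (𝓝 (Tinf a)) :=
      fun a => ((WeakDual.eval_continuous a).tendsto Tinf).comp hTinflim
    have hSev : ∀ a : A, Tendsto (fun i => τ i (a * f (k i))) (U : Filter ℕ) (𝓝 (Sinf a)) :=
      fun a => ((WeakDual.eval_continuous a).tendsto Sinf).comp hSinflim
    -- (1) Sinf is tracial
    have hS1 : ∀ a b : A, Sinf (a * b) = Sinf (b * a) := by
      intro a b
      have h1 := hSev (a * b)
      have h2 := hSev (b * a)
      have hdiff : Tendsto (fun i => τ i ((a * b) * f (k i)) - τ i ((b * a) * f (k i)))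
          (U : Filter ℕ) (𝓝 0) := by
        have hbound : ∀ i, ‖τ i ((a * b) * f (k i)) - τ i ((b * a) * f (k i))‖
            ≤ ‖a‖ * ‖f (k i) * b - b * f (k i)‖ := by
          intro i
          have e1 : τ i ((b * a) * f (k i)) = τ i (a * (f (k i) * b)) := by
            rw [mul_assoc b a (f (k i)), (hτT i).1 b (a * f (k i)), mul_assoc a (f (k i)) b]
          have e2 : τ i ((a * b) * f (k i)) = τ i (a * (b * f (k i))) := by
            rw [mul_assoc a b (f (k i))]
          rw [e1, e2, ← map_sub, ← mul_sub]
          calc ‖τ i (a * (b * f (k i) - f (k i) * b))‖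
              ≤ ‖a * (b * f (k i) - f (k i) * b)‖ := by
                exact abs_apply_le (hτT i) _
            _ ≤ ‖a‖ * ‖b * f (k i) - f (k i) * b‖ := norm_mul_le _ _
            _ = ‖a‖ * ‖f (k i) * b - b * f (k i)‖ := by rw [norm_sub_rev]
        have hlim : Tendsto (fun i => ‖a‖ * ‖f (k i) * b - b * f (k i)‖)
            (U : Filter ℕ) (𝓝 0) := by
          have := ((hcentral b).const_mul ‖a‖).mono_left hU
          simpa using this
        exact squeeze_zero_norm hbound hlim
      have h0 := tendsto_nhds_unique (h1.sub h2) hdiff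
      exact sub_eq_zero.mp h0
    -- (2) Sinf is positive
    have hS2 : ∀ a : A, 0 ≤ a → 0 ≤ (Sinf a).re ∧ (Sinf a).im = 0 := by
      intro a ha
      have h1 := hSev a
      constructor
      · exact ge_of_tendsto ((Complex.continuous_re.tendsto _).comp h1)
          (Filter.Eventually.of_forall fun i => (trace_mul_pos (hτT i) (hg0 i) ha).1)
      · refine tendsto_nhds_unique ((Complex.continuous_im.tendsto _).comp h1) ?_
        have hz : (fun i => (τ i (a * f (k i))).im) = fun _ => (0 : ℝ) :=
          funext fun i => (trace_mul_pos (hτT i) (hg0 i) ha).2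
        show Tendsto (fun i => (τ i (a * f (k i))).im) (U : Filter ℕ) (𝓝 0)
        rw [hz]
        exact tendsto_const_nhds
    -- (3) norm bound for Sinf
    have habsS : ∀ a : A, ‖Sinf a‖ ≤ ‖a‖ * μ := by
      intro a
      exact le_of_tendsto_of_tendsto' ((continuous_norm.tendsto _).comp (hSev a))
        (hμlim.const_mul ‖a‖) fun i => abs_trace_mul_le (hτT i) (hg0 i) a
    -- (4) distance bound
    have hdistS : ∀ a : A, ‖Tinf a - Sinf a‖ ≤ ‖a‖ * (1 - μ) := by
      intro a
      have h1 : Tendsto (fun i => τ i a - τ i (a * f (k i))) (U : Filter ℕ)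
          (𝓝 (Tinf a - Sinf a)) := (hTev a).sub (hSev a)
      exact le_of_tendsto_of_tendsto' ((continuous_norm.tendsto _).comp h1)
        (((tendsto_const_nhds (x := (1:ℝ))).sub hμlim).const_mul ‖a‖)
        fun i => abs_trace_sub_mul_le (hτT i) (hg0 i) (hg1 i) a
    -- (5) norm of Sinf equals μ
    have hμ0 : 0 ≤ μ := hμmem.1
    have hμ1 : μ ≤ 1 := hμmem.2
    have hSle : ‖WeakDual.toStrongDual Sinf‖ ≤ μ := by
      refine ContinuousLinearMap.opNorm_le_bound _ hμ0 fun a => ?_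
      rw [show ‖(WeakDual.toStrongDual Sinf) a‖ = ‖Sinf a‖ from
        rfl]
      calc ‖Sinf a‖ ≤ ‖a‖ * μ := habsS a
        _ = μ * ‖a‖ := mul_comm _ _
    have hSge : μ ≤ ‖WeakDual.toStrongDual Sinf‖ := by
      have hb : ∀ a : A, ‖(WeakDual.toStrongDual Tinf) a‖
          ≤ (‖WeakDual.toStrongDual Sinf‖ + (1 - μ)) * ‖a‖ := by
        intro a
        have e : Tinf a = Sinf a + (Tinf a - Sinf a) := by ring
        have h1 : ‖Sinf a‖ ≤ ‖WeakDual.toStrongDual Sinf‖ * ‖a‖ :=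
          (WeakDual.toStrongDual Sinf).le_opNorm a
        have h2 : ‖Tinf a - Sinf a‖ ≤ ‖a‖ * (1 - μ) := by
          exact hdistS a
        calc ‖(WeakDual.toStrongDual Tinf) a‖ = ‖Sinf a + (Tinf a - Sinf a)‖ := by
              rw [← e]; rfl
          _ ≤ ‖Sinf a‖ + ‖Tinf a - Sinf a‖ := norm_add_le _ _
          _ ≤ ‖WeakDual.toStrongDual Sinf‖ * ‖a‖ + ‖a‖ * (1 - μ) := add_le_add h1 h2
          _ = (‖WeakDual.toStrongDual Sinf‖ + (1 - μ)) * ‖a‖ := by ring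
      have h3 := ContinuousLinearMap.opNorm_le_bound (WeakDual.toStrongDual Tinf)
        (add_nonneg (norm_nonneg _) (by linarith)) hb
      rw [hTinfmem.2.2] at h3
      linarith
    -- (6) value limit
    have hτg : ∀ i, τ i (f (k i)) = ((m i : ℝ) : ℂ) := by
      intro i
      have h1 := (hτT i).2.1 _ (hg0 i)
      apply Complex.ext
      · simp [hm]
      · simp [h1.2]
    have hglim : Tendsto (fun i => τ i (f (k i))) (U : Filter ℕ) (𝓝 ((μ : ℝ) : ℂ)) := by
      have hz : (fun i => τ i (f (k i))) = fun i => ((m i : ℝ) : ℂ) := funext hτg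
      rw [hz]
      exact (Complex.continuous_ofReal.tendsto μ).comp hμlim
    have hvallim : Tendsto (fun i => ‖τ i (c * f (k i)) - (θ : ℂ) * τ i (f (k i))‖)
        (U : Filter ℕ) (𝓝 (‖Sinf c - (θ : ℂ) * ((μ : ℝ) : ℂ)‖)) :=
      (continuous_norm.tendsto _).comp ((hSev c).sub (tendsto_const_nhds.mul hglim))
    have hge : 2 * M + ε ≤ ‖Sinf c - (θ : ℂ) * ((μ : ℝ) : ℂ)‖ :=
      ge_of_tendsto hvallim (Filter.Eventually.of_forall fun i => (hτv i).le)
    -- (7) contradiction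
    rcases eq_or_lt_of_le hμ0 with hμz | hμpos
    · have h1 : ‖Sinf c‖ ≤ 0 := by
        have := habsS c
        rw [← hμz, mul_zero] at this
        exact this
      have h2 : Sinf c = 0 :=
        norm_eq_zero.mp (le_antisymm h1 (norm_nonneg _))
      rw [h2, ← hμz] at hge
      simp only [Complex.ofReal_zero, mul_zero, sub_zero, map_zero, norm_zero] at hge
      linarith
    · set ρ : WeakDual ℂ A := ((μ⁻¹ : ℝ) : ℂ) • Sinf with hρ
      have hρapp : ∀ a : A, ρ a = ((μ⁻¹ : ℝ) : ℂ) * Sinf a := fun a => rfl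
      have hρT : ρ ∈ tracialStateSet A := by
        refine ⟨fun a b => by rw [hρapp, hρapp, hS1 a b], fun a ha => ?_, ?_⟩
        · rw [hρapp]
          constructor
          · rw [Complex.re_ofReal_mul]
            exact mul_nonneg (inv_nonneg.mpr hμ0) (hS2 a ha).1
          · rw [Complex.im_ofReal_mul, (hS2 a ha).2, mul_zero]
        · have he : WeakDual.toStrongDual ρ = ((μ⁻¹ : ℝ) : ℂ) • WeakDual.toStrongDual Sinf := rfl
          rw [he, norm_smul]
          have hnorm : ‖WeakDual.toStrongDual Sinf‖ = μ := le_antisymm hSle hSge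
          rw [hnorm]
          rw [show ‖((μ⁻¹ : ℝ) : ℂ)‖ = |μ⁻¹| by rw [Complex.norm_real, Real.norm_eq_abs]]
          rw [abs_of_nonneg (inv_nonneg.mpr hμ0)]
          field_simp
      have hfin := hMub ρ hρT
      have hμne : ((μ : ℝ) : ℂ) ≠ 0 := by
        exact_mod_cast ne_of_gt hμpos
      have hfactor : Sinf c - (θ : ℂ) * ((μ : ℝ) : ℂ) = ((μ : ℝ) : ℂ) * (ρ c - (θ : ℂ)) := by
        rw [hρapp]
        have : ((μ⁻¹ : ℝ) : ℂ) = ((μ : ℝ) : ℂ)⁻¹ := by push_cast; ring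
        rw [this]
        field_simp
      rw [hfactor, norm_mul, Complex.norm_real, Real.norm_eq_abs, abs_of_nonneg hμ0] at hge
      nlinarith [norm_nonneg (ρ c - (θ : ℂ)), hfin, hμ1, hμ0, hM0, hε]
  refine le_of_forall_pos_le_add fun ε hε => ?_
  have hcob : Filter.IsCoboundedUnder (· ≤ ·) atTop s :=
    Filter.isCoboundedUnder_le_of_le atTop (x := 0) fun n => hs0 n
  exact Filter.limsup_le_of_le hcob (main ε hε)


end Paper
end
end
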